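/- If s, t, u > 0 satisfy (d−2)tu > s(s+t+u) for some integer d ≥ 3, then the circumcenter of the d-simplex A_d(s,t,u) (with squared edges ‖p_1−p_2‖² = ‖p_1−p_j‖² = s+t+u for 4 ≤ j ≤ d+1, ‖p_1−p_3‖² = s+u, ‖p_i−p_j‖² = s+t for 2 ≤ i < j ≤ d+1) lies outside the convex hull of its vertices. -/

import Mathlib

set_option maxHeartbeats 1000000

open Finset

lemma sum_dist_sq_eq {n N : ℕ} (p : Fin n → EuclideanSpace ℝ (Fin N)) (w : Fin n → ℝ)
    (hw : ∑ i, w i = 1) (O : EuclideanSpace ℝ (Fin N))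
    (hO : Finset.univ.affineCombination ℝ p w = O) (k : Fin n) :
    dist O (p k) ^ 2 =
      (∑ i, w i * (dist (p i) (p k) ^ 2))
        - (∑ i, ∑ j, w i * w j * (dist (p i) (p j) ^ 2)) / 2 := by
  classical
  set δ := Finset.affineCombinationSingleWeights ℝ k with hδ
  have h2 : ∑ i, δ i = 1 := by
    rw [hδ]; exact Finset.univ.sum_affineCombinationSingleWeights ℝ (Finset.mem_univ k)
  have hd := EuclideanGeometry.dist_affineCombination (s := Finset.univ) p hw h2
  rw [Finset.univ.affineCombination_affineCombinationSingleWeights ℝ p (Finset.mem_univ k),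
    hO] at hd
  have collapse : ∀ f : Fin n → ℝ, ∑ j, δ j * f j = f k := by
    intro f
    rw [Finset.sum_eq_single k]
    · simp [hδ, Finset.affineCombinationSingleWeights_apply_self]
    · intro b _ hb; simp [hδ, Finset.affineCombinationSingleWeights_apply_of_ne ℝ hb]
    · simp
  have expand : ∑ i, ∑ j, (w - δ) i * (w - δ) j * (dist (p i) (p j) * dist (p i) (p j))
      = (∑ i, ∑ j, w i * w j * (dist (p i) (p j) ^ 2))
        - 2 * ∑ i, w i * (dist (p i) (p k) ^ 2) := by
    have hsplit : ∀ i, ∑ j, (w - δ) i * (w - δ) j * (dist (p i) (p j) * dist (p i) (p j))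
        = (∑ j, w i * w j * (dist (p i) (p j) ^ 2))
          - δ i * (∑ j, w j * (dist (p i) (p j) ^ 2))
          - w i * (dist (p i) (p k) ^ 2)
          + δ i * (dist (p i) (p k) ^ 2) := by
      intro i
      have h1 : ∀ j, (w - δ) i * (w - δ) j * (dist (p i) (p j) * dist (p i) (p j))
          = w i * w j * (dist (p i) (p j) ^ 2)
            - δ i * (w j * (dist (p i) (p j) ^ 2))
            - w i * (δ j * (dist (p i) (p j) ^ 2))
            + δ i * (δ j * (dist (p i) (p j) ^ 2)) := by
        intro j; simp only [Pi.sub_apply]; ring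
      rw [Finset.sum_congr rfl fun j _ => h1 j, Finset.sum_add_distrib,
        Finset.sum_sub_distrib, Finset.sum_sub_distrib, ← Finset.mul_sum, ← Finset.mul_sum,
        ← Finset.mul_sum]
      simp only [collapse (fun j => dist (p i) (p j) ^ 2)]
    rw [Finset.sum_congr rfl fun i _ => hsplit i, Finset.sum_add_distrib,
      Finset.sum_sub_distrib, Finset.sum_sub_distrib]
    rw [collapse (fun i => (∑ j, w j * (dist (p i) (p j) ^ 2))),
      collapse (fun i => dist (p i) (p k) ^ 2)]
    have hKK : dist (p k) (p k) ^ 2 = 0 := by simp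
    have hswap : ∑ j, w j * (dist (p k) (p j) ^ 2) = ∑ j, w j * (dist (p j) (p k) ^ 2) := by
      apply Finset.sum_congr rfl; intro j _; rw [dist_comm]
    rw [hKK, hswap]
    ring
  have hd' : dist O (p k) * dist O (p k) =
      (-∑ i, ∑ j, (w - δ) i * (w - δ) j * (dist (p i) (p j) * dist (p i) (p j))) / 2 := hd
  rw [show (-∑ i, ∑ j, (w - δ) i * (w - δ) j * (dist (p i) (p j) * dist (p i) (p j)))
      = -((∑ i, ∑ j, w i * w j * (dist (p i) (p j) ^ 2))
        - 2 * ∑ i, w i * (dist (p i) (p k) ^ 2)) from by rw [expand]] at hd'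
  rw [pow_two, hd']
  ring

/-- if `(d−2)tu > s(s+t+u)`, then the circumcenter of any realization of
`A_d(s,t,u)` lies outside the convex hull of its vertices. Vertex `0` is `p₁`,
vertex `1` is `p₂`, vertex `2` is `p₃`. -/
theorem stmt19 (d : ℕ) (hd : 3 ≤ d) (s t u : ℝ) (hs : 0 < s) (ht : 0 < t) (hu : 0 < u)
    (hcond : s * (s + t + u) < ((d : ℝ) - 2) * t * u)
    {N : ℕ} (p : Fin (d + 1) → EuclideanSpace ℝ (Fin N))
    (hind : AffineIndependent ℝ p)
    (h12 : dist (p 0) (p 1) ^ 2 = s + t + u)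
    (h1j : ∀ j : Fin (d + 1), 3 ≤ (j : ℕ) → dist (p 0) (p j) ^ 2 = s + t + u)
    (h13 : dist (p 0) (p 2) ^ 2 = s + u)
    (hij : ∀ i j : Fin (d + 1), 1 ≤ (i : ℕ) → i < j → dist (p i) (p j) ^ 2 = s + t)
    (O : EuclideanSpace ℝ (Fin N))
    (hOspan : O ∈ affineSpan ℝ (Set.range p))
    (hOdist : ∀ i j, dist O (p i) = dist O (p j)) :
    O ∉ convexHull ℝ (Set.range p) := by
  classical
  intro hmem
  rw [convexHull_range_eq_exists_affineCombination] at hmem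
  obtain ⟨sf, w0, hw0nn, hw0sum, hw0eq⟩ := hmem
  set w : Fin (d + 1) → ℝ := Set.indicator ↑sf w0 with hw
  have hwsum : ∑ i, w i = 1 := by
    rw [hw]
    rw [← hw0sum]
    exact Finset.sum_indicator_subset w0 sf.subset_univ
  have hwnn : ∀ i, 0 ≤ w i := by
    intro i
    rw [hw]
    by_cases h : i ∈ sf
    · rw [Set.indicator_of_mem (by exact_mod_cast h)]
      exact hw0nn i h
    · rw [Set.indicator_of_notMem (by exact_mod_cast h)]
  have hwO : Finset.univ.affineCombination ℝ p w = O := by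
    rw [hw, ← Finset.affineCombination_indicator_subset w0 p sf.subset_univ]
    exact hw0eq
  have Eeq : ∀ k l : Fin (d + 1),
      ∑ i, w i * (dist (p i) (p k) ^ 2) = ∑ i, w i * (dist (p i) (p l) ^ 2) := by
    intro k l
    have hk := sum_dist_sq_eq p w hwsum O hwO k
    have hl := sum_dist_sq_eq p w hwsum O hwO l
    have hkl : dist O (p k) = dist O (p l) := hOdist k l
    rw [hkl] at hk
    rw [hk] at hl
    linarith
  -- special indices
  set i0 : Fin (d + 1) := ⟨0, by omega⟩ with hi0
  set i1 : Fin (d + 1) := ⟨1, by omega⟩ with hi1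
  set i2 : Fin (d + 1) := ⟨2, by omega⟩ with hi2
  have e0 : (0 : Fin (d + 1)) = i0 := rfl
  have e1 : (1 : Fin (d + 1)) = i1 := by
    apply Fin.ext
    have h : (1 : ℕ) % (d + 1) = 1 := Nat.mod_eq_of_lt (by omega)
    simp [hi1, Fin.val_one', h]
  have e2 : (2 : Fin (d + 1)) = i2 := by
    apply Fin.ext
    have h : (2 : ℕ) % (d + 1) = 2 := Nat.mod_eq_of_lt (by omega)
    simp [hi2, Fin.val_natCast, h, OfNat.ofNat]
  rw [e0, e1] at h12
  rw [e0, e2] at h13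
  simp only [e0] at h1j
  -- distance facts
  have hDside : ∀ i k : Fin (d + 1), 1 ≤ (i : ℕ) → 1 ≤ (k : ℕ) → i ≠ k →
      dist (p i) (p k) ^ 2 = s + t := by
    intro i k hi hk hne
    rcases lt_or_gt_of_ne hne with h | h
    · exact hij i k hi h
    · rw [dist_comm]
      exact hij k i hk h
  have hD0 : ∀ i : Fin (d + 1), (i : ℕ) ≠ 0 → (i : ℕ) ≠ 2 →
      dist (p i) (p i0) ^ 2 = s + t + u := by
    intro i h1 h2
    rw [dist_comm]
    rcases Nat.lt_or_ge (i : ℕ) 3 with h | h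
    · have hieq : i = i1 := by
        apply Fin.ext
        simp only [hi1]
        omega
      rw [hieq]
      exact h12
    · exact h1j i h
  -- sum splitting
  have split2 : ∀ a b : Fin (d + 1), a ≠ b → ∀ f : Fin (d + 1) → ℝ,
      ∑ i, f i = f a + (f b + ∑ i ∈ (Finset.univ.erase a).erase b, f i) := by
    intro a b hab f
    have hb : b ∈ Finset.univ.erase a := Finset.mem_erase.2 ⟨hab.symm, Finset.mem_univ b⟩
    rw [← Finset.add_sum_erase _ f (Finset.mem_univ a), ← Finset.add_sum_erase _ f hb]
  have ne02 : i0 ≠ i2 := by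
    intro h
    have := congrArg Fin.val h
    simp [hi0, hi2] at this
  set T := (Finset.univ.erase i0).erase i2 with hT
  have hTsum : ∑ i ∈ T, w i = 1 - w i0 - w i2 := by
    have h := split2 i0 i2 ne02 w
    rw [hwsum] at h
    linarith
  have hTval : ∀ i ∈ T, (i : ℕ) ≠ 0 ∧ (i : ℕ) ≠ 2 := by
    intro i hi
    rw [hT, Finset.mem_erase, Finset.mem_erase] at hi
    exact ⟨fun h => hi.2.1 (Fin.ext h), fun h => hi.1 (Fin.ext h)⟩
  have hE0 : ∑ i, w i * (dist (p i) (p i0) ^ 2)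
      = w i2 * (s + u) + (s + t + u) * (1 - w i0 - w i2) := by
    rw [split2 i0 i2 ne02 (fun i => w i * (dist (p i) (p i0) ^ 2))]
    have hA : dist (p i0) (p i0) ^ 2 = 0 := by simp
    have hB : dist (p i2) (p i0) ^ 2 = s + u := by rw [dist_comm]; exact h13
    have hC : ∑ i ∈ T, w i * (dist (p i) (p i0) ^ 2) = ∑ i ∈ T, w i * (s + t + u) := by
      refine Finset.sum_congr rfl fun i hi => ?_
      obtain ⟨h1, h2⟩ := hTval i hi
      rw [hD0 i h1 h2]
    simp only [hA, hB]
    rw [hC, ← Finset.sum_mul, hTsum]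
    ring
  have hEk : ∀ k : Fin (d + 1), 1 ≤ (k : ℕ) → (k : ℕ) ≠ 2 →
      ∑ i, w i * (dist (p i) (p k) ^ 2)
        = w i0 * (s + t + u) + (s + t) * (1 - w i0 - w k) := by
    intro k hk1 hk2
    have hki0 : i0 ≠ k := by
      intro h
      rw [← h] at hk1
      simp [hi0] at hk1
    rw [split2 i0 k hki0 (fun i => w i * (dist (p i) (p k) ^ 2))]
    have hA : dist (p i0) (p k) ^ 2 = s + t + u := by
      rw [dist_comm]
      exact hD0 k (by omega) hk2
    have hB : dist (p k) (p k) ^ 2 = 0 := by simp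
    have hC : ∑ i ∈ (Finset.univ.erase i0).erase k, w i * (dist (p i) (p k) ^ 2)
        = ∑ i ∈ (Finset.univ.erase i0).erase k, w i * (s + t) := by
      refine Finset.sum_congr rfl fun i hi => ?_
      rw [Finset.mem_erase, Finset.mem_erase] at hi
      have hiv : 1 ≤ (i : ℕ) := by
        rcases Nat.eq_zero_or_pos (i : ℕ) with h | h
        · exact absurd (Fin.ext h : i = i0) hi.2.1
        · omega
      rw [hDside i k hiv hk1 hi.1]
    have hWk : ∑ i ∈ (Finset.univ.erase i0).erase k, w i = 1 - w i0 - w k := by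
      have h := split2 i0 k hki0 w
      rw [hwsum] at h
      linarith
    simp only [hA, hB]
    rw [hC, ← Finset.sum_mul, hWk]
    ring
  have hE2 : ∑ i, w i * (dist (p i) (p i2) ^ 2)
      = w i0 * (s + u) + (s + t) * (1 - w i0 - w i2) := by
    rw [split2 i0 i2 ne02 (fun i => w i * (dist (p i) (p i2) ^ 2))]
    have hA : dist (p i0) (p i2) ^ 2 = s + u := h13
    have hB : dist (p i2) (p i2) ^ 2 = 0 := by simp
    have hC : ∑ i ∈ T, w i * (dist (p i) (p i2) ^ 2) = ∑ i ∈ T, w i * (s + t) := by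
      refine Finset.sum_congr rfl fun i hi => ?_
      obtain ⟨h1, h2⟩ := hTval i hi
      have hne : i ≠ i2 := fun h => h2 (by rw [h])
      rw [hDside i i2 (by omega) (by simp [hi2]) hne]
    simp only [hA, hB]
    rw [hC, ← Finset.sum_mul, hTsum]
    ring
  have hst : (0 : ℝ) < s + t := by linarith
  have hone : 1 ≤ (i1 : ℕ) := le_refl 1
  have hone2 : (i1 : ℕ) ≠ 2 := by simp [hi1]
  have hα : ∀ k : Fin (d + 1), 1 ≤ (k : ℕ) → (k : ℕ) ≠ 2 → w k = w i1 := by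
    intro k hk1 hk2
    have h := Eeq k i1
    rw [hEk k hk1 hk2, hEk i1 hone hone2] at h
    have h3 : (s + t) * (1 - w i0 - w k) = (s + t) * (1 - w i0 - w i1) := by linarith
    have h4 := mul_left_cancel₀ (ne_of_gt hst) h3
    linarith
  have hm2 : i2 ∈ Finset.univ.erase i0 := Finset.mem_erase.2 ⟨ne02.symm, Finset.mem_univ i2⟩
  have hcard : T.card = d - 1 := by
    rw [hT, Finset.card_erase_of_mem hm2, Finset.card_erase_of_mem (Finset.mem_univ i0),
      Finset.card_univ, Fintype.card_fin]
    omega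
  have hT1 : ∑ i ∈ T, w i = ((d : ℝ) - 1) * w i1 := by
    have hcongr : ∀ i ∈ T, w i = w i1 := by
      intro i hi
      obtain ⟨h1, h2⟩ := hTval i hi
      exact hα i (by omega) h2
    rw [Finset.sum_congr rfl hcongr, Finset.sum_const, hcard, nsmul_eq_mul]
    have h1d : (1 : ℕ) ≤ d := by omega
    rw [Nat.cast_sub h1d]
    norm_num
  have h1' : ((d : ℝ) - 1) * w i1 = 1 - w i0 - w i2 := by rw [← hT1]; exact hTsum
  have hA' := Eeq i2 i0
  rw [hE2, hE0] at hA'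
  have hB' := Eeq i1 i0
  rw [hEk i1 hone hone2, hE0] at hB'
  have hd3 : (3 : ℝ) ≤ (d : ℝ) := by exact_mod_cast hd
  have key2 : w i2 * ((((d : ℝ) - 1) * (s + t + 2 * u) + (s + t)) * s
        + (((d : ℝ) - 1) * t + s + t) * (s + 2 * u))
      = s * (s + t + u) - ((d : ℝ) - 2) * t * u := by
    linear_combination (s + 2 * u) * ((d : ℝ) - 1) * hB' + (s + 2 * u) * (s + t) * h1'
      - (((d : ℝ) - 1) * (s + t + 2 * u) + (s + t)) * hA'
  have hApos : 0 < ((d : ℝ) - 1) * (s + t + 2 * u) + (s + t) := by nlinarith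
  have hBpos : 0 < ((d : ℝ) - 1) * t + s + t := by nlinarith
  have hden : 0 < (((d : ℝ) - 1) * (s + t + 2 * u) + (s + t)) * s
      + (((d : ℝ) - 1) * t + s + t) * (s + 2 * u) := by
    have h1 := mul_pos hApos hs
    have h2 := mul_pos hBpos (by linarith : (0 : ℝ) < s + 2 * u)
    linarith
  have hy : 0 ≤ w i2 := hwnn i2
  have hnn := mul_nonneg hy hden.le
  linarith [key2, hcond, hnn]
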